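/- arXiv:1811.10271 — 2 statements merged into one kernel-verified Lean document; each statement's English description precedes it below -/
import Mathlib

section
/- If a vertex v of a pure d-dimensional balanced simplicial complex Δ is removable (i.e., there exists a cross-flip χ_Φ such that v is not a vertex of χ_Φ(Δ)), then the link of v in Δ has exactly 2d vertices. -/
open Finset

variable {V : Type} [DecidableEq V] {W : Type} [DecidableEq W]

/-- An abstract simplicial complex, given by its finite set of (nonempty) faces. -/
def IsCplx (K : Finset (Finset V)) : Prop :=
  ∅ ∉ K ∧ ∀ F ∈ K, ∀ G, G ⊆ F → G ≠ ∅ → G ∈ K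

/-- The vertex set of a complex. -/
def verts (K : Finset (Finset V)) : Finset V := K.sup id

/-- The number of `i`-dimensional faces. -/
def fnum (K : Finset (Finset V)) (i : ℕ) : ℕ := (K.filter fun F => F.card = i + 1).card

/-- The link of a face. -/
def link (K : Finset (Finset V)) (F : Finset V) : Finset (Finset V) :=
  K.filter fun G => Disjoint G F ∧ G ∪ F ∈ K

/-- A complex is pure `d`-dimensional. -/
def PureC (d : ℕ) (K : Finset (Finset V)) : Prop :=
  (∀ F ∈ K, F.card ≤ d + 1) ∧ ∀ F ∈ K, ∃ G ∈ K, F ⊆ G ∧ G.card = d + 1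

/-- A proper `(d+1)`-coloring of the vertices. -/
def ProperColoring (d : ℕ) (K : Finset (Finset V)) (κ : V → Fin (d + 1)) : Prop :=
  ∀ F ∈ K, Set.InjOn κ ↑F

/-- A `d`-dimensional complex is balanced if its graph is `(d+1)`-colorable. -/
def BalancedC (d : ℕ) (K : Finset (Finset V)) : Prop :=
  ∃ κ : V → Fin (d + 1), ProperColoring d K κ

/-- Connectivity of the underlying graph. -/
def Conn (K : Finset (Finset V)) : Prop :=
  ∀ u ∈ verts K, ∀ w ∈ verts K,
    Relation.ReflTransGen (fun a b => ({a, b} : Finset V) ∈ K) u w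

/-- Isomorphism onto. -/
def IsoTo (K : Finset (Finset V)) (L : Finset (Finset W)) : Prop :=
  ∃ f : V → W, Set.InjOn f ↑(verts K) ∧ L = K.image (Finset.image f)

/-- The boundary complex of the `(d+1)`-dimensional cross-polytope. -/
def stdCross (d : ℕ) : Finset (Finset (Fin (d + 1) × Bool)) :=
  (univ : Finset (Fin (d + 1) × Bool)).powerset.filter fun F =>
    F ≠ ∅ ∧ ∀ p ∈ F, ∀ q ∈ F, Prod.fst p = Prod.fst q → p = q

/-- A bistellar flip in dimension `d`. -/
def BisFlip (d : ℕ) (K K' : Finset (Finset V)) : Prop :=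
  ∃ A B : Finset V, A ≠ ∅ ∧ B ≠ ∅ ∧ Disjoint A B ∧ A.card + B.card = d + 2 ∧
    B ∉ K ∧ (∀ F : Finset V, F ≠ ∅ → F ⊆ A ∪ B → ¬B ⊆ F → F ∈ K) ∧
    (∀ F ∈ K, A ⊆ F → F ⊆ A ∪ B) ∧
    K' = K.filter (fun F => ¬A ⊆ F) ∪
      (A ∪ B).powerset.filter (fun F => F ≠ ∅ ∧ ¬A ⊆ F)

/-- The boundary of the `(d+1)`-simplex. -/
def stdBdSimplex (d : ℕ) : Finset (Finset (Fin (d + 2))) :=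
  (univ : Finset (Fin (d + 2))).powerset.filter fun F => F ≠ ∅ ∧ F ≠ univ

/-- A combinatorial `d`-sphere: bistellarly equivalent to the boundary of a simplex
(Pachner's theorem). -/
def IsCombSphere (d : ℕ) (K : Finset (Finset V)) : Prop :=
  ∃ (n : ℕ) (K₀ K₁ : Finset (Finset (Fin n))),
    IsoTo (stdBdSimplex d) K₀ ∧
    Relation.ReflTransGen (fun X Y => BisFlip d X Y ∨ BisFlip d Y X) K₀ K₁ ∧
    IsoTo K₁ K
/-- The faces of the boundary of a pure `d`-dimensional complex. -/
def bdryFaces (d : ℕ) (K : Finset (Finset V)) : Finset (Finset V) :=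
  K.filter fun G => ∃ R ∈ K, G ⊆ R ∧ R.card = d ∧
    (K.filter fun F => F.card = d + 1 ∧ R ⊆ F).card = 1

/-- The complex obtained by coning off the boundary. -/
def coneBdry (d : ℕ) (K : Finset (Finset V)) : Finset (Finset (Option V)) :=
  K.image (Finset.image some) ∪ {({(none : Option V)} : Finset (Option V))} ∪
    (bdryFaces d K).image fun G => insert none (G.image some)

/-- A combinatorial `d`-ball: coning off the boundary gives a combinatorial `d`-sphere. -/
def IsCombBall (d : ℕ) (K : Finset (Finset V)) : Prop :=
  IsCombSphere d (coneBdry d K)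

/-- If a vertex `v` of a pure `d`-dimensional balanced complex `Δ` is removable by a
cross-flip (there is a cross-flip `χ_Φ` with `v ∉ χ_Φ(Δ)`), then the link of `v` has
exactly `2d` vertices. -/
theorem stmt0 {V : Type} [DecidableEq V] (d : ℕ) (Δ : Finset (Finset V))
    (hcplx : IsCplx Δ) (hpure : PureC d Δ) (hbal : BalancedC d Δ)
    (v : V) (hv : ({v} : Finset V) ∈ Δ)
    (hrem : ∃ (Φ C : Finset (Finset V)),
      -- Φ is an induced subcomplex of Δ
      Φ ⊆ Δ ∧ Φ = Δ.filter (fun F => F ⊆ verts Φ) ∧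
      -- Φ is a d-ball
      IsCombBall d Φ ∧
      -- C is a copy of ∂C_{d+1} containing Φ as a subcomplex
      (∃ f : Fin (d + 1) × Bool → V, Function.Injective f ∧
        C = (stdCross d).image (Finset.image f)) ∧
      Φ ⊆ C ∧
      -- the new vertices are fresh
      Disjoint (verts C \ verts Φ) (verts Δ) ∧
      -- v is not a vertex of the flipped complex χ_Φ(Δ) = (Δ ∖ Φ) ∪ (C ∖ Φ)
      v ∉ verts ((Δ \ Φ) ∪
        (C.filter fun G => ∃ H ∈ C, G ⊆ H ∧ H.card = d + 1 ∧ H ∉ Φ))) :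
    (verts (link Δ ({v} : Finset V))).card = 2 * d := by

  classical
  obtain ⟨Φ, C, hΦΔ, hind, hball, ⟨f, hf, hC⟩, hΦC, hfresh, hvnot⟩ := hrem
  -- v is in no face of the flipped complex
  have hvn : ∀ F, F ∈ (Δ \ Φ) ∪
      (C.filter fun G => ∃ H ∈ C, G ⊆ H ∧ H.card = d + 1 ∧ H ∉ Φ) → v ∉ F := by
    intro F hF hvF
    exact hvnot (Finset.mem_sup.2 ⟨F, hF, hvF⟩)
  have hvΦ : ({v} : Finset V) ∈ Φ := by
    by_contra h
    exact hvn {v} (mem_union_left _ (mem_sdiff.2 ⟨hv, h⟩)) (mem_singleton_self v)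
  -- v = f p₀
  have hvC : ({v} : Finset V) ∈ (stdCross d).image (Finset.image f) := by
    rw [← hC]; exact hΦC hvΦ
  obtain ⟨S, hS, hSv⟩ := mem_image.1 hvC
  have hvS : v ∈ S.image f := by rw [hSv]; exact mem_singleton_self v
  obtain ⟨p₀, hp₀S, hp₀⟩ := mem_image.1 hvS
  -- any face of Δ containing v lies in Φ
  have hface : ∀ F ∈ Δ, v ∈ F → F ∈ Φ := by
    intro F hF hvF; by_contra h
    exact hvn F (mem_union_left _ (mem_sdiff.2 ⟨hF, h⟩)) hvF
  -- any facet of C containing v lies in Φ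
  have hfacet : ∀ H ∈ C, H.card = d + 1 → v ∈ H → H ∈ Φ := by
    intro H hH hcard hvH
    by_contra h
    exact hvn {v} (mem_union_right _ (mem_filter.2 ⟨hΦC hvΦ,
      ⟨H, hH, singleton_subset_iff.2 hvH, hcard, h⟩⟩)) (mem_singleton_self v)
  -- membership in stdCross, unfolded
  have hstd : ∀ T : Finset (Fin (d + 1) × Bool), T ∈ stdCross d ↔
      T ≠ ∅ ∧ ∀ p ∈ T, ∀ q ∈ T, Prod.fst p = Prod.fst q → p = q := by
    intro T
    simp [stdCross]
  -- the key set identity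
  have hkey : verts (link Δ ({v} : Finset V)) =
      (univ.filter fun q : Fin (d + 1) × Bool => q.1 ≠ p₀.1).image f := by
    ext w
    constructor
    · intro hw
      obtain ⟨G, hG, hwG⟩ := Finset.mem_sup.1 hw
      simp only [id] at hwG
      obtain ⟨hGΔ, hdisj, hGu⟩ := mem_filter.1 hG
      have hvGu : v ∈ G ∪ {v} := mem_union_right _ (mem_singleton_self v)
      have hGuΦ : G ∪ {v} ∈ Φ := hface _ hGu hvGu
      have hGuC : G ∪ {v} ∈ (stdCross d).image (Finset.image f) := by
        rw [← hC]; exact hΦC hGuΦ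
      obtain ⟨T, hT, hTeq⟩ := mem_image.1 hGuC
      have hwT : w ∈ T.image f := by rw [hTeq]; exact mem_union_left _ hwG
      have hvT : v ∈ T.image f := by rw [hTeq]; exact hvGu
      obtain ⟨q, hqT, hq⟩ := mem_image.1 hwT
      obtain ⟨p, hpT, hp⟩ := mem_image.1 hvT
      have hpp0 : p = p₀ := hf (by rw [hp, hp₀])
      refine mem_image.2 ⟨q, mem_filter.2 ⟨mem_univ _, ?_⟩, hq⟩
      intro hq1
      have hqp : q = p := ((hstd T).1 hT).2 q hqT p hpT (by rw [hq1, hpp0])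
      have : q = p₀ := hqp.trans hpp0
      have hwv : w = v := by rw [← hq, this, ← hpp0, hp]
      exact (Finset.disjoint_singleton_right.1 hdisj) (hwv ▸ hwG)
    · intro hw
      obtain ⟨q, hq, hqw⟩ := mem_image.1 hw
      have hq1 : q.1 ≠ p₀.1 := (mem_filter.1 hq).2
      -- build a facet of C containing both p₀ and q
      set g : Fin (d + 1) → Fin (d + 1) × Bool :=
        fun k => if k = p₀.1 then p₀ else if k = q.1 then q else (k, false) with hg
      have hg1 : ∀ k, (g k).1 = k := by
        intro k
        simp only [hg]
        split_ifs with h1 h2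
        · rw [h1]
        · rw [h2]
        · rfl
      set T : Finset (Fin (d + 1) × Bool) := univ.image g with hgT
      have hp₀T : p₀ ∈ T := mem_image.2 ⟨p₀.1, mem_univ _, by simp [hg]⟩
      have hqT : q ∈ T := mem_image.2 ⟨q.1, mem_univ _, by simp [hg, hq1]⟩
      have hTstd : T ∈ stdCross d := by
        rw [hstd]
        constructor
        · exact ne_empty_of_mem hp₀T
        · intro a ha b hb hab
          obtain ⟨ka, _, hka⟩ := mem_image.1 ha
          obtain ⟨kb, _, hkb⟩ := mem_image.1 hb
          have : ka = kb := by rw [← hg1 ka, ← hg1 kb, hka, hkb, hab]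
          rw [← hka, ← hkb, this]
      have hTcard : T.card = d + 1 := by
        rw [hgT, Finset.card_image_of_injective _ (fun a b hab => by
          rw [← hg1 a, ← hg1 b, hab]), card_univ, Fintype.card_fin]
      set H : Finset V := T.image f with hH
      have hHC : H ∈ C := by rw [hC]; exact mem_image.2 ⟨T, hTstd, rfl⟩
      have hHcard : H.card = d + 1 := by
        rw [hH, Finset.card_image_of_injective _ hf, hTcard]
      have hvH : v ∈ H := by rw [← hp₀]; exact mem_image_of_mem f hp₀T
      have hHΦ : H ∈ Φ := hfacet H hHC hHcard hvH
      have hHΔ : H ∈ Δ := hΦΔ hHΦ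
      have hwH : w ∈ H := by rw [← hqw]; exact mem_image_of_mem f hqT
      have hwv : w ≠ v := by
        intro h
        exact hq1 (congrArg Prod.fst (hf (by rw [hqw, h, hp₀])))
      have hsub : ({w} : Finset V) ∪ {v} ⊆ H := by
        intro x hx
        rcases mem_union.1 hx with h | h
        · rw [mem_singleton.1 h]; exact hwH
        · rw [mem_singleton.1 h]; exact hvH
      have hwΔ : ({w} : Finset V) ∈ Δ :=
        hcplx.2 H hHΔ {w} (singleton_subset_iff.2 hwH) (singleton_ne_empty w)
      have hedge : ({w} : Finset V) ∪ {v} ∈ Δ :=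
        hcplx.2 H hHΔ _ hsub (ne_empty_of_mem (mem_union_right _ (mem_singleton_self v)))
      have hlink : ({w} : Finset V) ∈ link Δ ({v} : Finset V) :=
        mem_filter.2 ⟨hwΔ, Finset.disjoint_singleton_right.2 (notMem_singleton.2 (Ne.symm hwv)), hedge⟩
      exact Finset.mem_sup.2 ⟨{w}, hlink, mem_singleton_self w⟩
  rw [hkey, Finset.card_image_of_injective _ hf]
  have h2 : (univ.filter fun q : Fin (d + 1) × Bool => q.1 = p₀.1) =
      {(p₀.1, false), (p₀.1, true)} := by
    ext ⟨a, b⟩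
    cases b <;> simp [Prod.ext_iff]
  have h2c : (univ.filter fun q : Fin (d + 1) × Bool => q.1 = p₀.1).card = 2 := by
    rw [h2, card_pair (by simp)]
  have htot := Finset.card_filter_add_card_filter_not
    (s := (univ : Finset (Fin (d + 1) × Bool))) (p := fun q => q.1 = p₀.1)
  have huniv : (univ : Finset (Fin (d + 1) × Bool)).card = 2 * (d + 1) := by
    simp [card_univ, mul_comm]
  simp only [ne_eq]
  omega
end

section
/- Let Δ be a balanced 2-dimensional Cohen-Macaulay simplicial complex that is not shellable, such that every edge of Δ is contained in at least two triangles. Then each of the three color classes of Δ contains at least three vertices. -/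
open Finset

variable {V : Type} [DecidableEq V] {W : Type} [DecidableEq W]

/-- Shellability. -/
def Shellable (d : ℕ) (K : Finset (Finset V)) : Prop :=
  PureC d K ∧
  ∃ l : List (Finset V), l.Nodup ∧ l.toFinset = K.filter (fun F => F.card = d + 1) ∧
    ∀ i : Fin l.length, i.val ≠ 0 → ∀ G, G ≠ ∅ → G ⊆ l.get i →
      (∃ j : Fin l.length, j < i ∧ G ⊆ l.get j) →
      ∃ H, H.card = d ∧ G ⊆ H ∧ H ⊆ l.get i ∧ ∃ j : Fin l.length, j < i ∧ H ⊆ l.get j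
/-- The simplicial boundary of an oriented simplex, with coefficients in `k`. -/
noncomputable def bd1 (k : Type) [Field k] [LinearOrder V] (F : Finset V) :
    (Finset V) →₀ k :=
  (((F.sort (· ≤ ·)).zipIdx.map Prod.swap).map fun p =>
    ((-1 : k) ^ p.1) • Finsupp.single (F.erase p.2) (1 : k)).sum

/-- The simplicial boundary operator on chains (including the augmentation). -/
noncomputable def Dbd (k : Type) [Field k] [LinearOrder V] (z : (Finset V) →₀ k) :
    (Finset V) →₀ k :=
  z.sum fun F a => a • bd1 k F

/-- A reduced simplicial `i`-cycle of `K`. -/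
def IsCyc (k : Type) [Field k] [LinearOrder V] (K : Finset (Finset V)) (i : ℕ)
    (z : (Finset V) →₀ k) : Prop :=
  ↑z.support ⊆ {G : Finset V | G ∈ K ∧ G.card = i + 1} ∧ Dbd k z = 0

/-- A reduced simplicial `i`-boundary of `K`. -/
def IsBdr (k : Type) [Field k] [LinearOrder V] (K : Finset (Finset V)) (i : ℕ)
    (z : (Finset V) →₀ k) : Prop :=
  ∃ c : (Finset V) →₀ k,
    ↑c.support ⊆ {G : Finset V | G ∈ K ∧ G.card = i + 2} ∧ Dbd k c = z

/-- Vanishing of the `i`-th reduced homology with coefficients in `k`. -/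
def HVanish (k : Type) [Field k] [LinearOrder V] (K : Finset (Finset V)) (i : ℕ) : Prop :=
  ∀ z, IsCyc k K i z → IsBdr k K i z

/-- The `m`-th reduced homology is one-dimensional over `k`. -/
def HTopOne (k : Type) [Field k] [LinearOrder V] (K : Finset (Finset V)) (m : ℕ) : Prop :=
  (∃ z, IsCyc k K m z ∧ ¬IsBdr k K m z) ∧
  ∀ z₁ z₂, IsCyc k K m z₁ → IsCyc k K m z₂ →
    ∃ a b : k, ¬(a = 0 ∧ b = 0) ∧ IsBdr k K m (a • z₁ + b • z₂)

/-- A `k`-homology `d`-sphere. -/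
def IsHomSphere (d : ℕ) (k : Type) [Field k] [LinearOrder V] (K : Finset (Finset V)) : Prop :=
  (∀ i, i < d → HVanish k K i) ∧ HTopOne k K d

/-- A `k`-homology `d`-manifold: the link of every nonempty face has the reduced
homology of a sphere of the appropriate dimension. -/
def IsHomManifold (d : ℕ) (k : Type) [Field k] [LinearOrder V] (K : Finset (Finset V)) : Prop :=
  IsCplx K ∧ PureC d K ∧
    ∀ F ∈ K, F.card ≤ d → IsHomSphere (d - F.card) k (link K F)


/-- Cohen–Macaulayness over `k` of a 2-dimensional complex (Reisner's criterion):
the reduced homology of the complex vanishes in degrees 0 and 1, and the reduced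
0-th homology of each vertex link vanishes. -/
def IsCM2 (k : Type) [Field k] {V : Type} [DecidableEq V] [LinearOrder V]
    (K : Finset (Finset V)) : Prop :=
  IsCplx K ∧ K.Nonempty ∧ PureC 2 K ∧
  HVanish k K 0 ∧ HVanish k K 1 ∧
  ∀ v : V, ({v} : Finset V) ∈ K → HVanish k (link K ({v} : Finset V)) 0

lemma bd1_singleton (k : Type) [Field k] [LinearOrder V] (x : V) :
    bd1 k ({x} : Finset V) = Finsupp.single ∅ 1 := by
  have hs : ({x} : Finset V).sort (· ≤ ·) = [x] := by
    simpa using Finset.sort_singleton (α := V) (· ≤ ·) x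
  simp [bd1, hs]

lemma bd1_pair (k : Type) [Field k] [LinearOrder V] (F : Finset V) (h : F.card = 2) :
    ∃ a b : V, a ≠ b ∧ F = {a, b} ∧
      bd1 k F = Finsupp.single {b} 1 - Finsupp.single {a} 1 := by
  have hlen : (F.sort (· ≤ ·)).length = 2 := by
    rw [Finset.length_sort]; exact h
  obtain ⟨a, b, hab⟩ : ∃ a b, F.sort (· ≤ ·) = [a, b] := by
    match hl : F.sort (· ≤ ·), hlen with
    | [a, b], _ => exact ⟨a, b, rfl⟩
  have hnd := Finset.sort_nodup F (· ≤ ·)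
  rw [hab] at hnd
  have hne : a ≠ b := by simp at hnd; tauto
  have hF : F = {a, b} := by
    have := Finset.sort_toFinset F (· ≤ ·)
    rw [hab] at this
    simpa using this.symm
  refine ⟨a, b, hne, hF, ?_⟩
  have h1 : F.erase a = {b} := by
    rw [hF]; rw [Finset.erase_insert (by simp [hne])]
  have h2 : F.erase b = {a} := by
    rw [hF, Finset.erase_insert_of_ne hne]
    simp
  simp [bd1, hab, h1, h2, sub_eq_add_neg]

lemma Dbd_single (k : Type) [Field k] [LinearOrder V] (F : Finset V) (a : k) :
    Dbd k (Finsupp.single F a) = a • bd1 k F := by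
  unfold Dbd
  exact Finsupp.sum_single_index (by simp)

lemma conn_of_hvanish (k : Type) [Field k] [LinearOrder V] (L : Finset (Finset V))
    (hsing : ∀ x ∈ verts L, ({x} : Finset V) ∈ L)
    (hv : HVanish k L 0) :
    ∀ x ∈ verts L, ∀ y ∈ verts L,
      Relation.ReflTransGen (fun a b => ({a, b} : Finset V) ∈ L) x y := by
  classical
  intro x hx y hy
  by_cases hxy : x = y
  · exact hxy ▸ Relation.ReflTransGen.refl
  by_contra hcon
  -- the cycle [x] - [y]
  set z : (Finset V) →₀ k := Finsupp.single {x} 1 - Finsupp.single {y} 1 with hz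
  have hzs : ↑z.support ⊆ {G : Finset V | G ∈ L ∧ G.card = 1} := by
    intro G hG
    have : G ∈ ({({x} : Finset V), {y}} : Finset (Finset V)) := by
      have h1 := Finsupp.support_add (g₁ := Finsupp.single ({x} : Finset V) (1:k))
        (g₂ := Finsupp.single ({y} : Finset V) (-1:k))
      have h2 : z = Finsupp.single ({x} : Finset V) (1:k) +
          Finsupp.single ({y} : Finset V) (-1:k) := by
        rw [hz, sub_eq_add_neg, ← Finsupp.single_neg]
      rw [h2] at hG
      have := h1 hG
      simp only [Finset.mem_union] at this
      rcases this with h | h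
      · exact Finset.mem_insert.2 (Or.inl (by simpa using Finsupp.support_single_subset h))
      · exact Finset.mem_insert.2 (Or.inr (by simpa using Finsupp.support_single_subset h))
    simp only [Finset.mem_insert, Finset.mem_singleton] at this
    rcases this with rfl | rfl
    · exact ⟨hsing x hx, by simp⟩
    · exact ⟨hsing y hy, by simp⟩
  have hzc : Dbd k z = 0 := by
    have : z = Finsupp.single ({x} : Finset V) (1:k) - Finsupp.single ({y} : Finset V) (1:k) := rfl
    rw [this, sub_eq_add_neg, ← Finsupp.single_neg]
    unfold Dbd
    rw [Finsupp.sum_add_index' (by simp) (by intro a b c; rw [add_smul])]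
    rw [Finsupp.sum_single_index (by simp), Finsupp.sum_single_index (by simp)]
    rw [bd1_singleton, bd1_singleton]
    simp
  have hcyc : IsCyc k L 0 z := ⟨hzs, hzc⟩
  have hbdr := hv z hcyc
  unfold IsBdr at hbdr
  obtain ⟨c, hcs, hcd⟩ := hbdr
  -- the component functional
  set S : Set V := {w | Relation.ReflTransGen (fun a b => ({a, b} : Finset V) ∈ L) x w} with hS
  set w : Finset V → k := fun G => if ∃ u ∈ G, u ∈ S then 1 else 0 with hw
  set φ := Finsupp.linearCombination k w with hφ
  have hφsingle : ∀ (G : Finset V) (a : k), φ (Finsupp.single G a) = a * w G := by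
    intro G a
    rw [hφ, Finsupp.linearCombination_single, smul_eq_mul]
  have hedge0 : ∀ F ∈ c.support, φ (bd1 k F) = 0 := by
    intro F hF
    obtain ⟨hFL, hF2⟩ := hcs hF
    obtain ⟨a, b, hab, hFab, hbd⟩ := bd1_pair k F hF2
    rw [hbd, map_sub, hφsingle, hφsingle]
    have hiff : (a ∈ S) ↔ (b ∈ S) := by
      constructor
      · intro h; exact h.tail (hFab ▸ hFL)
      · intro h; refine h.tail ?_; rw [Finset.pair_comm]; exact hFab ▸ hFL
    simp only [hw, one_mul]
    by_cases ha : a ∈ S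
    · rw [if_pos (by exact ⟨b, by simp, hiff.1 ha⟩), if_pos ⟨a, by simp, ha⟩]
      ring
    · rw [if_neg (by rintro ⟨u, hu, hus⟩; simp at hu; subst hu; exact ha (hiff.2 hus)),
        if_neg (by rintro ⟨u, hu, hus⟩; simp at hu; subst hu; exact ha hus)]
      ring
  have h0 : φ (Dbd k c) = 0 := by
    unfold Dbd
    rw [map_finsuppSum]
    rw [Finsupp.sum]
    apply Finset.sum_eq_zero
    intro F hF
    rw [map_smul, hedge0 F hF, smul_zero]
  rw [hcd] at h0
  have h1 : φ z = 1 := by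
    have : z = Finsupp.single ({x} : Finset V) (1:k) - Finsupp.single ({y} : Finset V) (1:k) := rfl
    rw [this, map_sub, hφsingle, hφsingle]
    simp only [hw, one_mul]
    rw [if_pos ⟨x, by simp, Relation.ReflTransGen.refl⟩,
      if_neg (by rintro ⟨u, hu, hus⟩; simp at hu; subst hu; exact hcon hus)]
    ring
  rw [h0] at h1
  exact one_ne_zero h1.symm

lemma orderE (E : Finset (Finset V)) (h2 : ∀ e ∈ E, e.card = 2)
    (Rel : V → V → Prop) (hR : ∀ a b, Rel a b → a = b ∨ ({a, b} : Finset V) ∈ E)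
    (hc : ∀ e ∈ E, ∀ f ∈ E, ∀ a ∈ e, ∀ b ∈ f, Relation.ReflTransGen Rel a b) :
    ∃ les : List (Finset V), les.Nodup ∧ les.toFinset = E ∧
      ∀ p (hp : p < les.length), p ≠ 0 →
        ∃ q, ∃ hq : q < les.length, q < p ∧ (les[p] ∩ les[q]).Nonempty := by
  classical
  rcases E.eq_empty_or_nonempty with rfl | ⟨e0, he0⟩
  · exact ⟨[], by simp, by simp, by simp⟩
  have grow : ∀ n (les : List (Finset V)), les.Nodup → les.toFinset ⊆ E → les ≠ [] →
      (∀ p (hp : p < les.length), p ≠ 0 →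
        ∃ q, ∃ hq : q < les.length, q < p ∧ (les[p] ∩ les[q]).Nonempty) →
      (E \ les.toFinset).card = n →
      ∃ les' : List (Finset V), les'.Nodup ∧ les'.toFinset = E ∧
        ∀ p (hp : p < les'.length), p ≠ 0 →
          ∃ q, ∃ hq : q < les'.length, q < p ∧ (les'[p] ∩ les'[q]).Nonempty := by
    intro n
    induction n with
    | zero =>
      intro les hnd hsub _ hprop hcard
      refine ⟨les, hnd, ?_, hprop⟩
      have : E \ les.toFinset = ∅ := Finset.card_eq_zero.1 hcard
      have h1 : E ⊆ les.toFinset := fun g hg => by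
        by_contra hgs
        exact absurd (Finset.mem_sdiff.2 ⟨hg, hgs⟩) (by rw [this]; simp)
      exact Finset.Subset.antisymm (fun g hg => hsub hg) h1 |>.symm ▸ rfl
    | succ n ih =>
      intro les hnd hsub hne hprop hcard
      -- find a new edge meeting the old ones
      obtain ⟨g, hg⟩ : (E \ les.toFinset).Nonempty := by
        rw [← Finset.card_pos, hcard]; omega
      rw [Finset.mem_sdiff] at hg
      obtain ⟨f0, hf0⟩ : ∃ f0, f0 ∈ les.toFinset := by
        cases les with
        | nil => exact absurd rfl hne
        | cons h t => exact ⟨h, by simp⟩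
      have hf0E : f0 ∈ E := hsub hf0
      obtain ⟨a, ha⟩ : f0.Nonempty := by
        rw [← Finset.card_pos, h2 f0 hf0E]; omega
      obtain ⟨b, hb⟩ : g.Nonempty := by
        rw [← Finset.card_pos, h2 g hg.1]; omega
      have hrel := hc f0 hf0E g hg.1 a ha b hb
      have hQ : (∃ f ∈ les.toFinset, b ∈ f) ∨
          (∃ g' ∈ E, g' ∉ les.toFinset ∧ ∃ x ∈ g', ∃ f ∈ les.toFinset, x ∈ f) := by
        clear hb
        induction hrel with
        | refl => exact Or.inl ⟨f0, hf0, ha⟩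
        | @tail u v h1 h2' ih2 =>
          rcases hR u v h2' with rfl | hmem
          · exact ih2
          rcases ih2 with ⟨f, hf, huf⟩ | hr
          · by_cases hcase : ({u, v} : Finset V) ∈ les.toFinset
            · exact Or.inl ⟨{u, v}, hcase, by simp⟩
            · exact Or.inr ⟨{u, v}, hmem, hcase, u, by simp, f, hf, huf⟩
          · exact Or.inr hr
      have hkey : ∃ g' ∈ E, g' ∉ les.toFinset ∧ ∃ x ∈ g', ∃ f ∈ les.toFinset, x ∈ f := by
        rcases hQ with ⟨f, hf, hbf⟩ | hr
        · exact ⟨g, hg.1, hg.2, b, hb, f, hf, hbf⟩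
        · exact hr
      obtain ⟨g', hg'E, hg'S, x, hxg', f, hfS, hxf⟩ := hkey
      have hg'les : g' ∉ les := fun h => hg'S (List.mem_toFinset.2 h)
      refine ih (les ++ [g']) ?_ ?_ (by simp) ?_ ?_
      · rw [List.nodup_append]
        exact ⟨hnd, by simp, by simp [hg'les]; intro a ha h; exact hg'les (h ▸ ha)⟩
      · intro t ht
        simp only [List.toFinset_append, Finset.mem_union, List.toFinset_cons,
          List.toFinset_nil, List.mem_toFinset] at ht
        rcases ht with ht | ht
        · exact hsub (List.mem_toFinset.2 ht)
        · simp at ht; subst ht; exact hg'E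
      · intro p hp hp0
        rw [List.length_append, List.length_singleton] at hp
        by_cases hcase : p < les.length
        · obtain ⟨q, hq, hqp, hmeet⟩ := hprop p hcase hp0
          refine ⟨q, by simp; omega, hqp, ?_⟩
          rwa [List.getElem_append_left hcase, List.getElem_append_left hq]
        · have hpl : p = les.length := by omega
          obtain ⟨q, hq, hfq⟩ := List.mem_iff_getElem.1 (List.mem_toFinset.1 hfS)
          refine ⟨q, by simp; omega, by omega, ?_⟩
          rw [List.getElem_append_left hq,
            List.getElem_append_right (by omega)]
          refine ⟨x, Finset.mem_inter.2 ⟨?_, hfq ▸ hxf⟩⟩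
          simp [hpl, hxg']
      · have : E \ (les ++ [g']).toFinset = (E \ les.toFinset).erase g' := by
          ext t
          simp only [Finset.mem_sdiff, Finset.mem_erase, List.toFinset_append,
            Finset.mem_union, List.toFinset_cons, List.toFinset_nil]
          constructor
          · rintro ⟨ht, hnt⟩
            push_neg at hnt
            exact ⟨by simpa using hnt.2, ht, hnt.1⟩
          · rintro ⟨htg, ht, hnt⟩
            exact ⟨ht, by push_neg; exact ⟨hnt, by simpa using htg⟩⟩
        rw [this, Finset.card_erase_of_mem (Finset.mem_sdiff.2 ⟨hg'E, hg'S⟩), hcard]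
        omega
  exact grow (E \ ({e0} : Finset (Finset V))).card [e0] (by simp) (by simpa using he0)
    (by simp) (by intro p hp hp0; simp at hp; omega) (by simp)

lemma keyblock (les : List (Finset V)) (hnd : les.Nodup) (h2 : ∀ e ∈ les, e.card = 2)
    (hconn : ∀ p (hp : p < les.length), p ≠ 0 →
      ∃ q, ∃ hq : q < les.length, q < p ∧ (les[p] ∩ les[q]).Nonempty)
    (v : V) (hv : ∀ e ∈ les, v ∉ e)
    (p q : ℕ) (hp : p < les.length) (hq : q < les.length) (hqp : q < p)
    (G : Finset V) (hG : G ⊆ insert v les[p] ∩ insert v les[q]) :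
    ∃ x, ∃ q', ∃ hq' : q' < les.length, q' < p ∧ x ∈ les[p] ∧ x ∈ les[q'] ∧
      G ⊆ insert v {x} := by
  have hne : les[p] ≠ les[q] := by
    rw [Ne, hnd.getElem_inj_iff]; omega
  by_cases hint : (les[p] ∩ les[q]).Nonempty
  · obtain ⟨x, hx⟩ := hint
    rw [Finset.mem_inter] at hx
    refine ⟨x, q, hq, hqp, hx.1, hx.2, ?_⟩
    intro g hg
    have hg' := hG hg
    rw [Finset.mem_inter, Finset.mem_insert, Finset.mem_insert] at hg'
    rcases hg'.1 with rfl | hgp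
    · simp
    rcases hg'.2 with rfl | hgq
    · exact absurd hgp (hv _ (les.getElem_mem hp) )
    -- g ∈ les[p] ∩ les[q]; show g = x
    by_cases hgx : g = x
    · simp [hgx]
    exfalso
    have hsub : ({g, x} : Finset V) ⊆ les[p] ∩ les[q] := by
      intro y hy
      rcases Finset.mem_insert.1 hy with rfl | hy
      · exact Finset.mem_inter.2 ⟨hgp, hgq⟩
      · rw [Finset.mem_singleton] at hy; subst hy
        exact Finset.mem_inter.2 ⟨hx.1, hx.2⟩
    have hc2 : 2 ≤ (les[p] ∩ les[q]).card := by
      calc 2 = ({g, x} : Finset V).card := (Finset.card_pair hgx).symm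
        _ ≤ _ := Finset.card_le_card hsub
    have he1 : les[p] ∩ les[q] = les[p] :=
      Finset.eq_of_subset_of_card_le Finset.inter_subset_left
        (by rw [h2 _ (les.getElem_mem hp)]; exact hc2)
    have he2 : les[p] ∩ les[q] = les[q] :=
      Finset.eq_of_subset_of_card_le Finset.inter_subset_right
        (by rw [h2 _ (les.getElem_mem hq)]; exact hc2)
    exact hne (he1 ▸ he2)
  · obtain ⟨q', hq', hq'p, x, hx⟩ := hconn p hp (by omega)
    rw [Finset.mem_inter] at hx
    refine ⟨x, q', hq', hq'p, hx.1, hx.2, ?_⟩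
    intro g hg
    have hg' := hG hg
    rw [Finset.mem_inter, Finset.mem_insert, Finset.mem_insert] at hg'
    rcases hg'.1 with rfl | hgp
    · simp
    rcases hg'.2 with rfl | hgq
    · exact absurd hgp (hv _ (les.getElem_mem hp))
    exact absurd ⟨g, Finset.mem_inter.2 ⟨hgp, hgq⟩⟩ hint

/-- A balanced 2-dimensional Cohen–Macaulay complex that is not shellable, in which
every edge lies in at least two triangles, has at least three vertices in each color
class. -/
theorem stmt4 {V : Type} [DecidableEq V] [LinearOrder V] (k : Type) [Field k]
    (K : Finset (Finset V)) (hCM : IsCM2 k K) (hns : ¬Shellable 2 K)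
    (hedge : ∀ e ∈ K, e.card = 2 →
      2 ≤ (K.filter fun T => T.card = 3 ∧ e ⊆ T).card)
    (κ : V → Fin 3) (hκ : ProperColoring 2 K κ) :
    ∀ c : Fin 3, 3 ≤ ((verts K).filter fun v => κ v = c).card := by
  classical
  intro c
  by_contra hlt
  push_neg at hlt
  obtain ⟨⟨hKne', hKdown⟩, hKne, hpure, hH0, hH1, hlinkH0⟩ := hCM
  set A : Finset V := (verts K).filter (fun v => κ v = c) with hA
  have hAcard : A.card ≤ 2 := by omega
  have hvertsK : ∀ F ∈ K, ∀ x ∈ F, x ∈ verts K := by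
    intro F hF x hx
    rw [verts, Finset.mem_sup]
    exact ⟨F, hF, hx⟩
  have hsingleton : ∀ x ∈ verts K, ({x} : Finset V) ∈ K := by
    intro x hx
    rw [verts, Finset.mem_sup] at hx
    obtain ⟨F, hF, hxF⟩ := hx
    exact hKdown F hF {x} (Finset.singleton_subset_iff.2 hxF) (by simp)
  -- each triangle has a unique vertex of color c, lying in A
  have htri : ∀ T ∈ K, T.card = 3 → ∃ v ∈ A, v ∈ T ∧ ∀ w ∈ T, w ∈ A → w = v := by
    intro T hT hT3
    have himg : T.image κ = Finset.univ := by
      apply Finset.eq_of_subset_of_card_le (Finset.subset_univ _)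
      rw [Finset.card_image_of_injOn (hκ T hT), hT3]
      simp
    have hc : c ∈ T.image κ := by rw [himg]; simp
    obtain ⟨v, hvT, hvc⟩ := Finset.mem_image.1 hc
    refine ⟨v, Finset.mem_filter.2 ⟨hvertsK T hT v hvT, hvc⟩, hvT, ?_⟩
    intro w hwT hwA
    exact hκ T hT hwT hvT ((Finset.mem_filter.1 hwA).2.trans hvc.symm)
  -- the edge set E: edges avoiding A
  set E : Finset (Finset V) := K.filter (fun e => e.card = 2 ∧ ∀ x ∈ e, x ∉ A) with hE
  -- erasing the colored vertex of a triangle gives an element of E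
  have htriE : ∀ T ∈ K, T.card = 3 → ∀ v ∈ A, v ∈ T → (∀ w ∈ T, w ∈ A → w = v) →
      T.erase v ∈ E ∧ T = insert v (T.erase v) := by
    intro T hT hT3 v hvA hvT huniq
    have hcard : (T.erase v).card = 2 := by
      rw [Finset.card_erase_of_mem hvT, hT3]
    refine ⟨Finset.mem_filter.2 ⟨?_, hcard, ?_⟩, (Finset.insert_erase hvT).symm⟩
    · refine hKdown T hT _ (Finset.erase_subset v T) ?_
      intro h
      rw [h] at hcard
      simp at hcard
    · intro x hx hxA
      exact absurd (huniq x (Finset.mem_of_mem_erase hx) hxA) (Finset.ne_of_mem_erase hx)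
  -- basic facts about E
  have hEK : ∀ e ∈ E, e ∈ K := fun e he => (Finset.mem_filter.1 he).1
  have hE2 : ∀ e ∈ E, e.card = 2 := fun e he => (Finset.mem_filter.1 he).2.1
  have hEA : ∀ e ∈ E, ∀ x ∈ e, x ∉ A := fun e he => (Finset.mem_filter.1 he).2.2
  -- every edge in E extends by every vertex of A, and A has exactly two elements
  have hP2' : ∀ e ∈ E, 2 ≤ A.card ∧ ∀ v ∈ A, insert v e ∈ K := by
    intro e he
    set Tri := K.filter (fun T => T.card = 3 ∧ e ⊆ T) with hTri
    have hTri2 : 2 ≤ Tri.card := hedge e (hEK e he) (hE2 e he)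
    have hTsub : Tri ⊆ A.image (fun v => insert v e) := by
      intro T hT
      obtain ⟨hTK, hT3, heT⟩ := Finset.mem_filter.1 hT
      obtain ⟨v, hvA, hvT, huniq⟩ := htri T hTK (by exact hT3)
      refine Finset.mem_image.2 ⟨v, hvA, ?_⟩
      have hvne : v ∉ e := fun hv => hEA e he v hv hvA
      apply Finset.eq_of_subset_of_card_le
      · exact Finset.insert_subset hvT heT
      · rw [hT3, Finset.card_insert_of_notMem hvne, hE2 e he]
    have himgcard : (A.image (fun v => insert v e)).card ≤ A.card :=
      Finset.card_image_le
    have h2A : 2 ≤ A.card := by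
      have := Finset.card_le_card hTsub
      omega
    have hAeq : A.card = 2 := le_antisymm hAcard h2A
    refine ⟨h2A, ?_⟩
    intro v hvA
    have hTeq : Tri = A.image (fun v => insert v e) :=
      Finset.eq_of_subset_of_card_le hTsub (by omega)
    have : insert v e ∈ Tri := by
      rw [hTeq]
      exact Finset.mem_image.2 ⟨v, hvA, rfl⟩
    exact (Finset.mem_filter.1 this).1
  -- E is nonempty, so A has exactly two elements
  obtain ⟨F0, hF0⟩ := hKne
  obtain ⟨T0, hT0K, _, hT03⟩ := hpure.2 F0 hF0
  obtain ⟨v0, hv0A, hv0T, huniq0⟩ := htri T0 hT0K hT03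
  obtain ⟨he0E, _⟩ := htriE T0 hT0K hT03 v0 hv0A hv0T huniq0
  have hEne : E.Nonempty := ⟨T0.erase v0, he0E⟩
  obtain ⟨v1, v2, hv12, hAeq⟩ := Finset.card_eq_two.1
    (le_antisymm hAcard (hP2' _ he0E).1)
  have hP2 : ∀ e ∈ E, ∀ v ∈ A, insert v e ∈ K := fun e he => (hP2' e he).2
  have hv1A : v1 ∈ A := by rw [hAeq]; simp
  have hv2A : v2 ∈ A := by rw [hAeq]; simp
  have hv1verts : v1 ∈ verts K := (Finset.mem_filter.1 hv1A).1
  have hv1K : ({v1} : Finset V) ∈ K := hsingleton v1 hv1verts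
  -- the link of v1
  set L : Finset (Finset V) := link K ({v1} : Finset V) with hL
  have hLsub : L ⊆ K := Finset.filter_subset _ _
  have hLsing : ∀ x ∈ verts L, ({x} : Finset V) ∈ L := by
    intro x hx
    rw [verts, Finset.mem_sup] at hx
    obtain ⟨G, hG, hxG⟩ := hx
    obtain ⟨hGK, hGd, hGu⟩ := Finset.mem_filter.1 hG
    have hxv1 : x ≠ v1 := fun h =>
      Finset.disjoint_left.1 hGd hxG (h ▸ Finset.mem_singleton_self v1)
    refine Finset.mem_filter.2 ⟨?_, by simp [hxv1], ?_⟩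
    · exact hKdown G hGK {x} (Finset.singleton_subset_iff.2 hxG) (by simp)
    · refine hKdown _ hGu _ ?_ (Finset.Nonempty.ne_empty ⟨x, by simp⟩)
      exact Finset.union_subset_union (Finset.singleton_subset_iff.2 hxG)
        (Finset.Subset.refl _)
  have hlinkconn := conn_of_hvanish k L hLsing (hlinkH0 v1 hv1K)
  -- E-edges lie in L, and L-edges lie in E
  have hEL : ∀ e ∈ E, e ∈ L := by
    intro e he
    have hv1e : v1 ∉ e := fun h => hEA e he v1 h hv1A
    refine Finset.mem_filter.2 ⟨hEK e he, Finset.disjoint_singleton_right.2 hv1e, ?_⟩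
    have : e ∪ {v1} = insert v1 e := by
      rw [Finset.union_comm, ← Finset.insert_eq]
    rw [this]
    exact hP2 e he v1 hv1A
  have hLE : ∀ a b : V, a ≠ b → ({a, b} : Finset V) ∈ L → ({a, b} : Finset V) ∈ E := by
    intro a b hab hmem
    obtain ⟨hK', hd, hu⟩ := Finset.mem_filter.1 hmem
    have hav1 : a ≠ v1 := fun h =>
      Finset.disjoint_left.1 hd (Finset.mem_insert_self a {b}) (h ▸ Finset.mem_singleton_self v1)
    have hbv1 : b ≠ v1 := fun h =>
      Finset.disjoint_left.1 hd (Finset.mem_insert.2 (Or.inr (Finset.mem_singleton_self b))) (h ▸ Finset.mem_singleton_self v1)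
    have hT3 : ({a, b} ∪ {v1} : Finset V).card = 3 := by
      rw [Finset.union_comm, ← Finset.insert_eq, Finset.card_insert_of_notMem (by simp [Ne.symm hav1, Ne.symm hbv1]),
        Finset.card_pair hab]
    obtain ⟨v, hvA, hvT, huniq⟩ := htri _ hu hT3
    have hvv1 : v = v1 := (huniq v1 (by simp) hv1A).symm
    refine Finset.mem_filter.2 ⟨hK', Finset.card_pair hab, ?_⟩
    intro x hx hxA
    have hxT : x ∈ ({a, b} ∪ {v1} : Finset V) := Finset.mem_union_left _ hx
    have := huniq x hxT hxA
    rw [hvv1] at this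
    rcases Finset.mem_insert.1 hx with rfl | hx'
    · exact hav1 this
    · rw [Finset.mem_singleton] at hx'; subst hx'; exact hbv1 this
  -- order the edges of E compatibly with connectivity
  obtain ⟨les, hlnd, hltf, hlconn⟩ := orderE E (fun e he => hE2 e he)
    (fun a b => ({a, b} : Finset V) ∈ L)
    (by
      intro a b hab
      by_cases h : a = b
      · exact Or.inl h
      · exact Or.inr (hLE a b h hab))
    (by
      intro e heE f hfE a ha b hb
      have haL : a ∈ verts L := by
        rw [verts, Finset.mem_sup]; exact ⟨e, hEL e heE, ha⟩
      have hbL : b ∈ verts L := by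
        rw [verts, Finset.mem_sup]; exact ⟨f, hEL f hfE, hb⟩
      exact hlinkconn a haL b hbL)
  have hlesE : ∀ e ∈ les, e ∈ E := fun e he => hltf ▸ List.mem_toFinset.2 he
  have hles2 : ∀ e ∈ les, e.card = 2 := fun e he => hE2 e (hlesE e he)
  have hv1les : ∀ e ∈ les, v1 ∉ e := fun e he h => hEA e (hlesE e he) v1 h hv1A
  have hv2les : ∀ e ∈ les, v2 ∉ e := fun e he h => hEA e (hlesE e he) v2 h hv2A
  set m := les.length with hm
  -- the triangles of K
  have hTriEq : K.filter (fun F => F.card = 2 + 1) =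
      (E.image (fun e => insert v1 e)) ∪ (E.image (fun e => insert v2 e)) := by
    ext T
    simp only [Finset.mem_filter, Finset.mem_union, Finset.mem_image]
    constructor
    · rintro ⟨hTK, hT3⟩
      obtain ⟨v, hvA, hvT, huniq⟩ := htri T hTK hT3
      obtain ⟨heE, hTeq⟩ := htriE T hTK hT3 v hvA hvT huniq
      have hvA' := hvA
      rw [hAeq] at hvA'
      rcases Finset.mem_insert.1 hvA' with rfl | hv
      · exact Or.inl ⟨T.erase v, heE, hTeq.symm⟩
      · rw [Finset.mem_singleton] at hv; subst hv
        exact Or.inr ⟨T.erase v, heE, hTeq.symm⟩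
    · rintro (⟨e, heE, rfl⟩ | ⟨e, heE, rfl⟩)
      · exact ⟨hP2 e heE v1 hv1A,
          by rw [Finset.card_insert_of_notMem (fun h => hEA e heE v1 h hv1A), hE2 e heE]⟩
      · exact ⟨hP2 e heE v2 hv2A,
          by rw [Finset.card_insert_of_notMem (fun h => hEA e heE v2 h hv2A), hE2 e heE]⟩
  -- the shelling order
  have hget1 : ∀ (n : ℕ) (hn : n < les.length)
      (h : n < (les.map (fun e => insert v1 e) ++ les.map (fun e => insert v2 e)).length),
      (les.map (fun e => insert v1 e) ++ les.map (fun e => insert v2 e))[n] =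
        insert v1 (les[n]) := by
    intro n hn h
    rw [List.getElem_append_left (by simpa using hn), List.getElem_map]
  have hget2 : ∀ (n : ℕ) (hn : n < les.length)
      (h : les.length + n <
        (les.map (fun e => insert v1 e) ++ les.map (fun e => insert v2 e)).length),
      (les.map (fun e => insert v1 e) ++ les.map (fun e => insert v2 e))[les.length + n] =
        insert v2 (les[n]) := by
    intro n hn h
    rw [List.getElem_append_right (by simp)]
    simp only [List.length_map, List.getElem_map]
    congr 1
    congr 1
    omega
  set l : List (Finset V) :=
    les.map (fun e => insert v1 e) ++ les.map (fun e => insert v2 e) with hldef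
  have hllen : l.length = m + m := by simp [hldef, hm]
  apply hns
  refine ⟨hpure, l, ?_, ?_, ?_⟩
  · -- Nodup
    have hinj : ∀ v : V, (∀ e ∈ les, v ∉ e) →
        ∀ x ∈ les, ∀ y ∈ les, insert v x = insert v y → x = y := by
      intro v hv x hx y hy h
      rw [← Finset.erase_insert (hv x hx), ← Finset.erase_insert (hv y hy), h]
    rw [hldef, List.nodup_append]
    refine ⟨List.Nodup.map_on (hinj v1 hv1les) hlnd,
      List.Nodup.map_on (hinj v2 hv2les) hlnd, ?_⟩
    intro T hT1 T' hT2 heq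
    obtain ⟨e, he, rfl⟩ := List.mem_map.1 hT1
    obtain ⟨e', he', rfl⟩ := List.mem_map.1 hT2
    have : v2 ∈ insert v1 e := by rw [heq]; simp
    rcases Finset.mem_insert.1 this with h | h
    · exact hv12 h.symm
    · exact hv2les e he h
  · -- toFinset
    rw [hTriEq, ← hltf]
    ext T
    simp only [hldef, List.mem_toFinset, List.mem_append, List.mem_map,
      Finset.mem_union, Finset.mem_image]
    try tauto
  · -- shelling condition
    intro i hi0 G hGne hGi hex
    obtain ⟨j, hji, hGj⟩ := hex
    have hil : i.val < m + m := by rw [← hllen]; exact i.isLt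
    have hjl : j.val < m + m := by rw [← hllen]; exact j.isLt
    have hjival : j.val < i.val := hji
    rw [List.get_eq_getElem] at hGi hGj
    by_cases hi : i.val < m
    · have hjm : j.val < m := by omega
      have hgi : l[i.val] = insert v1 (les[i.val]) := hget1 i.val hi i.isLt
      have hgj : l[j.val] = insert v1 (les[j.val]) := hget1 j.val hjm j.isLt
      rw [hgi] at hGi
      rw [hgj] at hGj
      obtain ⟨x, q', hq', hq'p, hxp, hxq', hGsub⟩ :=
        keyblock les hlnd hles2 hlconn v1 hv1les i.val j.val hi hjm hjival G
          (Finset.subset_inter hGi hGj)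
      have hxv1 : v1 ≠ x := by
        intro h; exact hv1les _ (les.getElem_mem hi) (h ▸ hxp)
      refine ⟨insert v1 {x}, ?_, hGsub, ?_, ⟨q', by omega⟩, ?_, ?_⟩
      · rw [Finset.card_insert_of_notMem (Finset.notMem_singleton.2 hxv1)]
        simp
      · rw [List.get_eq_getElem, hgi]
        exact Finset.insert_subset_insert _ (Finset.singleton_subset_iff.2 hxp)
      · show q' < i.val; omega
      · rw [List.get_eq_getElem]
        have : l[q']'(by omega) = insert v1 (les[q']) := hget1 q' hq' (by omega)
        rw [this]
        exact Finset.insert_subset_insert _ (Finset.singleton_subset_iff.2 hxq')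
    · have hpm : i.val - m < m := by omega
      have hip : i.val = m + (i.val - m) := by omega
      have hgi : l[i.val] = insert v2 (les[i.val - m]) := by
        conv_lhs => rw [show l[i.val] = l[m + (i.val - m)]'(by omega) from by congr 1 <;> omega]
        exact hget2 (i.val - m) hpm (by omega)
      rw [hgi] at hGi
      by_cases hj : j.val < m
      · have hgj : l[j.val] = insert v1 (les[j.val]) := hget1 j.val hj j.isLt
        rw [hgj] at hGj
        refine ⟨les[i.val - m], hles2 _ (les.getElem_mem hpm), ?_, ?_,
          ⟨i.val - m, by omega⟩, ?_, ?_⟩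
        · intro g hg
          have h1 := hGi hg
          have h2 := hGj hg
          rcases Finset.mem_insert.1 h1 with rfl | h1'
          · rcases Finset.mem_insert.1 h2 with h | h
            · exact absurd h.symm hv12
            · exact absurd h (hv2les _ (les.getElem_mem hj))
          · exact h1'
        · rw [List.get_eq_getElem, hgi]
          exact Finset.subset_insert _ _
        · show i.val - m < i.val; omega
        · rw [List.get_eq_getElem]
          have : l[i.val - m]'(by omega) = insert v1 (les[i.val - m]) :=
            hget1 (i.val - m) hpm (by omega)
          rw [this]
          exact Finset.subset_insert _ _
      · have hqm : j.val - m < m := by omega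
        have hgj : l[j.val] = insert v2 (les[j.val - m]) := by
          conv_lhs => rw [show l[j.val] = l[m + (j.val - m)]'(by omega) from by congr 1 <;> omega]
          exact hget2 (j.val - m) hqm (by omega)
        rw [hgj] at hGj
        obtain ⟨x, q', hq', hq'p, hxp, hxq', hGsub⟩ :=
          keyblock les hlnd hles2 hlconn v2 hv2les (i.val - m) (j.val - m) hpm hqm
            (by omega) G (Finset.subset_inter hGi hGj)
        have hxv2 : v2 ≠ x := by
          intro h; exact hv2les _ (les.getElem_mem hpm) (h ▸ hxp)
        refine ⟨insert v2 {x}, ?_, hGsub, ?_, ⟨m + q', by omega⟩, ?_, ?_⟩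
        · rw [Finset.card_insert_of_notMem (Finset.notMem_singleton.2 hxv2)]
          simp
        · rw [List.get_eq_getElem, hgi]
          exact Finset.insert_subset_insert _ (Finset.singleton_subset_iff.2 hxp)
        · show m + q' < i.val; omega
        · rw [List.get_eq_getElem]
          have : l[m + q']'(by omega) = insert v2 (les[q']) := hget2 q' hq' (by omega)
          rw [this]
          exact Finset.insert_subset_insert _ (Finset.singleton_subset_iff.2 hxq')
end
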